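/- With g and *_g as above: if β is a k-form on the closed orthant whose pullback to every boundary face Γᵢ = {xᵢ = 0} vanishes, then *_g β vanishes identically (all components, not just tangential ones) at every boundary point of the orthant. -/

import Mathlib

open scoped BigOperators
open Classical

namespace FEEC

variable {M : Type*} [AddCommGroup M] [Module ℝ M]

/-- The wedge product of two real-valued alternating maps. -/
noncomputable def wedge {k l : ℕ} (α : M [⋀^Fin k]→ₗ[ℝ] ℝ) (β : M [⋀^Fin l]→ₗ[ℝ] ℝ) :
    M [⋀^Fin (k + l)]→ₗ[ℝ] ℝ :=
  (((TensorProduct.lid ℝ ℝ).toLinearMap).compAlternatingMap (α.domCoprod β)).domDomCongr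
    finSumFinEquiv

/-- A linear functional, regarded as an alternating 1-form. -/
noncomputable def oneForm (θ : M →ₗ[ℝ] ℝ) : M [⋀^Fin 1]→ₗ[ℝ] ℝ :=
  AlternatingMap.ofSubsingleton ℝ M ℝ (0 : Fin 1) θ

/-- Left exterior multiplication of a `k`-form by the 1-form `θ`. -/
noncomputable def lwedge {k : ℕ} (θ : M →ₗ[ℝ] ℝ) (α : M [⋀^Fin k]→ₗ[ℝ] ℝ) :
    M [⋀^Fin (k + 1)]→ₗ[ℝ] ℝ :=
  (wedge (oneForm θ) α).domDomCongr (finCongr (Nat.add_comm 1 k))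

/-- Reinterpret a `k`-form as an `l`-form along an equality `k = l`. -/
noncomputable def castForm {k l : ℕ} (h : k = l) (α : M [⋀^Fin k]→ₗ[ℝ] ℝ) :
    M [⋀^Fin l]→ₗ[ℝ] ℝ :=
  α.domDomCongr (finCongr h)

/-- The wedge product of a family of covectors, `θ₁ ∧ ⋯ ∧ θₖ`; its value on
`(v₁, …, v_k)` is `det (θᵢ (v_j))`. -/
noncomputable def covWedge {k : ℕ} (φ : Fin k → (M →ₗ[ℝ] ℝ)) : M [⋀^Fin k]→ₗ[ℝ] ℝ :=
  Matrix.detRowAlternating.compLinearMap (LinearMap.pi φ)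

/-- Points of `ℝ^N`. -/
abbrev Vec (N : ℕ) := Fin N → ℝ

/-- A differential `k`-form on `ℝ^N`: an alternating-map-valued function. -/
abbrev Form (N k : ℕ) := Vec N → (Vec N [⋀^Fin k]→ₗ[ℝ] ℝ)

/-- `s = x₁ + ⋯ + x_N`. -/
noncomputable def sFun (N : ℕ) (x : Vec N) : ℝ := ∑ i, x i

/-- The constant 1-form `ds = dx₁ + ⋯ + dx_N`. -/
noncomputable def ds (N : ℕ) : Vec N →ₗ[ℝ] ℝ := ∑ i, LinearMap.proj i

/-- The exterior derivative of a `k`-form at a point, characterized by the standard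
coordinate-free formula `(dω)ₓ(v₀,…,v_k) = Σᵢ (-1)ⁱ (∂_{vᵢ} ω)(v₀,…,v̂ᵢ,…,v_k)`
(defined by definite description; junk value `0` if no alternating map satisfies it). -/
noncomputable def extDeriv {N k : ℕ} (ω : Form N k) (x : Vec N) :
    Vec N [⋀^Fin (k + 1)]→ₗ[ℝ] ℝ :=
  if h : ∃ η : Vec N [⋀^Fin (k + 1)]→ₗ[ℝ] ℝ, ∀ v : Fin (k + 1) → Vec N,
      η v = ∑ i : Fin (k + 1),
        (-1 : ℝ) ^ (i : ℕ) * fderiv ℝ (fun y => ω y (fun j => v (i.succAbove j))) x (v i)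
  then h.choose else 0

/-- Interior product with the Euler vector field `X = Σᵢ xᵢ ∂ᵢ` (which at the point `x`
is the vector `x` itself). -/
noncomputable def iEuler {N k : ℕ} (ω : Form N (k + 1)) : Form N k :=
  fun x => (ω x).curryLeft x

/-- The Lie derivative along the Euler vector field, via Cartan's formula
`𝔏_X = d ∘ i_X + i_X ∘ d` (with `i_X = 0` on 0-forms). -/
noncomputable def lieX {N : ℕ} : ∀ {k : ℕ}, Form N k → Form N k
  | 0, ω => fun x => (extDeriv ω x).curryLeft x
  | (_ + 1), ω => fun x => extDeriv (iEuler ω) x + (extDeriv ω x).curryLeft x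

/-- The modified exterior derivative `𝐝 = d − s⁻¹ ds ∧ 𝔏_X`. -/
noncomputable def bd {N k : ℕ} (ω : Form N k) : Form N (k + 1) :=
  fun x => extDeriv ω x - (sFun N x)⁻¹ • lwedge (ds N) (lieX ω x)

/-- `ω` has coefficients that are homogeneous polynomials of degree `r`. -/
def HomPolyForm {N k : ℕ} (r : ℕ) (ω : Form N k) : Prop :=
  ∀ v : Fin k → Vec N, ∃ P : MvPolynomial (Fin N) ℝ,
    P.IsHomogeneous r ∧ ∀ x, MvPolynomial.eval x P = ω x v

/-- The inner product of two `k`-forms induced (via Gram determinants) by the diagonal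
metric `⟨dxᵢ, dxᵢ⟩ = xᵢ` at the point `x`: explicitly
`⟨α, β⟩ = Σ_{i₁<⋯<i_k} x_{i₁}⋯x_{i_k} α(e_{i₁},…,e_{i_k}) β(e_{i₁},…,e_{i_k})`. -/
noncomputable def gInner {N k : ℕ} (x : Vec N) (α β : Vec N [⋀^Fin k]→ₗ[ℝ] ℝ) : ℝ :=
  ∑ s : Finset (Fin N), if h : s.card = k then
    (∏ i ∈ s, x i) * α (fun j => Pi.single ((s.orderIsoOfFin h j : Fin N)) 1)
      * β (fun j => Pi.single ((s.orderIsoOfFin h j : Fin N)) 1)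
  else 0

/-- The standard Euclidean volume form `dx₁ ∧ ⋯ ∧ dx_N`. -/
noncomputable def vol (N : ℕ) : Vec N [⋀^Fin N]→ₗ[ℝ] ℝ := Matrix.detRowAlternating

/-- The modified Hodge star `*_g` at the point `x`: the unique `l`-form `γ` with
`α ∧ γ = ⟨α, β⟩_g vol` for all `k`-forms `α` (junk value `0` if none exists). -/
noncomputable def hodge {N k l : ℕ} (h : k + l = N) (x : Vec N)
    (β : Vec N [⋀^Fin k]→ₗ[ℝ] ℝ) : Vec N [⋀^Fin l]→ₗ[ℝ] ℝ :=
  if H : ∃ γ : Vec N [⋀^Fin l]→ₗ[ℝ] ℝ, ∀ α : Vec N [⋀^Fin k]→ₗ[ℝ] ℝ,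
      castForm h (wedge α γ) = gInner x α β • vol N
  then H.choose else 0

/-- Pullback (restriction) of a `k`-form to the `i`-th coordinate hyperplane `{xᵢ = 0}`. -/
noncomputable def faceRestrict {N k : ℕ} (i : Fin N) (α : Vec N [⋀^Fin k]→ₗ[ℝ] ℝ) :
    (LinearMap.ker (LinearMap.proj i : Vec N →ₗ[ℝ] ℝ)) [⋀^Fin k]→ₗ[ℝ] ℝ :=
  α.compLinearMap (LinearMap.ker (LinearMap.proj i : Vec N →ₗ[ℝ] ℝ)).subtype


section Aux

lemma wedge_zero' {k l : ℕ} (α : M [⋀^Fin k]→ₗ[ℝ] ℝ) :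
    wedge α (0 : M [⋀^Fin l]→ₗ[ℝ] ℝ) = 0 := by
  have h0 : α.domCoprod (0 : M [⋀^Fin l]→ₗ[ℝ] ℝ) = 0 := by
    rw [← AlternatingMap.domCoprod'_apply, TensorProduct.tmul_zero, map_zero]
  unfold wedge
  rw [h0]
  ext v
  simp

lemma castForm_zero' {k l : ℕ} (h : k = l) : castForm h (0 : M [⋀^Fin k]→ₗ[ℝ] ℝ) = 0 := by
  ext v; simp [castForm]

lemma covWedge_apply' {N k : ℕ} (φ : Fin k → (Vec N →ₗ[ℝ] ℝ)) (v : Fin k → Vec N) :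
    covWedge φ v = Matrix.det (Matrix.of fun i j => φ j (v i)) := rfl

lemma cov_zero' {N k : ℕ} (u m : Fin k → Fin N) (i0 : Fin k) (h : ∀ j, u j ≠ m i0) :
    covWedge (fun i => (LinearMap.proj (u i) : Vec N →ₗ[ℝ] ℝ))
      (fun i => Pi.single (m i) (1:ℝ)) = 0 := by
  rw [covWedge_apply']
  apply Matrix.det_eq_zero_of_row_eq_zero i0
  intro j
  simp [Pi.single_apply, h j]

lemma cov_one' {N k : ℕ} (u : Fin k → Fin N) (hu : Function.Injective u) :
    covWedge (fun i => (LinearMap.proj (u i) : Vec N →ₗ[ℝ] ℝ))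
      (fun i => Pi.single (u i) (1:ℝ)) = 1 := by
  rw [covWedge_apply']
  have : (Matrix.of fun i j => (LinearMap.proj (u j) : Vec N →ₗ[ℝ] ℝ) (Pi.single (u i) (1:ℝ)))
      = (1 : Matrix (Fin k) (Fin k) ℝ) := by
    ext i j
    simp [Pi.single_apply, Matrix.one_apply, hu.eq_iff, eq_comm]
  rw [this, Matrix.det_one]

lemma mem_sumCongr_range' {k l : ℕ} {σ : Equiv.Perm (Fin k ⊕ Fin l)}
    (h : ∀ i, ∃ i', σ (Sum.inl i) = Sum.inl i') :
    σ ∈ (Equiv.Perm.sumCongrHom (Fin k) (Fin l)).range := by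
  choose f hf using h
  have hfinj : Function.Injective f := by
    intro a b hab
    exact Sum.inl_injective (σ.injective ((hf a).trans ((congrArg Sum.inl hab).trans (hf b).symm)))
  have hfbij : Function.Bijective f := Finite.injective_iff_bijective.mp hfinj
  have hg : ∀ j : Fin l, ∃ j', σ (Sum.inr j) = Sum.inr j' := by
    intro j
    cases hs : σ (Sum.inr j) with
    | inl i' =>
      obtain ⟨a, ha⟩ := hfbij.2 i'
      have : σ (Sum.inl a) = σ (Sum.inr j) := (hf a).trans (by rw [ha, hs])
      exact absurd (σ.injective this) (by simp)
    | inr j' => exact ⟨j', rfl⟩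
  choose g hgf using hg
  have hginj : Function.Injective g := by
    intro a b hab
    exact Sum.inr_injective (σ.injective ((hgf a).trans ((congrArg Sum.inr hab).trans (hgf b).symm)))
  refine ⟨(Equiv.ofBijective f hfbij, Equiv.ofBijective g (Finite.injective_iff_bijective.mp hginj)), ?_⟩
  ext s
  cases s with
  | inl i => simp [Equiv.Perm.sumCongrHom, Equiv.ofBijective, (hf i).symm]
  | inr j => simp [Equiv.Perm.sumCongrHom, Equiv.ofBijective, (hgf j).symm]

lemma wedge_nondeg' {n k l : ℕ} (h : k + l = n + 1) (γ : Vec (n+1) [⋀^Fin l]→ₗ[ℝ] ℝ)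
    (H : ∀ α : Vec (n+1) [⋀^Fin k]→ₗ[ℝ] ℝ, castForm h (wedge α γ) = 0) : γ = 0 := by
  refine Module.Basis.ext_alternating (Pi.basisFun ℝ (Fin (n+1))) (fun v hv => ?_)
  simp only [Pi.basisFun_apply, AlternatingMap.zero_apply]
  set S : Finset (Fin (n+1)) := (Finset.image v Finset.univ)ᶜ with hSdef
  have hScard : S.card = k := by
    have h1 : (Finset.image v Finset.univ).card = l := by
      rw [Finset.card_image_of_injective _ hv, Finset.card_univ, Fintype.card_fin]
    rw [Finset.card_compl, h1, Fintype.card_fin]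
    omega
  set u : Fin k → Fin (n+1) := fun i => (S.orderIsoOfFin hScard i : Fin (n+1)) with hudef
  have huinj : Function.Injective u := fun a b hab => by
    have := (S.orderIsoOfFin hScard).injective (Subtype.ext hab)
    exact this
  have huv : ∀ i j, u i ≠ v j := by
    intro i j hij
    have hmem : u i ∈ S := (S.orderIsoOfFin hScard i).2
    rw [hSdef, Finset.mem_compl] at hmem
    exact hmem (Finset.mem_image.mpr ⟨j, Finset.mem_univ j, hij.symm⟩)
  set α : Vec (n+1) [⋀^Fin k]→ₗ[ℝ] ℝ :=
    covWedge (fun i => (LinearMap.proj (u i) : Vec (n+1) →ₗ[ℝ] ℝ)) with hαdef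
  set W : Fin k ⊕ Fin l → Vec (n+1) := fun s => Pi.single (Sum.elim u v s) 1 with hWdef
  have hW0 : (TensorProduct.lid ℝ ℝ) ((α.domCoprod γ) W) = 0 := by
    set z : Fin (n+1) → Vec (n+1) := fun p => W (finSumFinEquiv.symm (finCongr h.symm p)) with hzdef
    have h2 : castForm h (wedge α γ) z = 0 := by rw [H α]; simp
    have h3 : castForm h (wedge α γ) z = (TensorProduct.lid ℝ ℝ) ((α.domCoprod γ) W) := by
      simp only [castForm, wedge, AlternatingMap.domDomCongr_apply,
        LinearMap.compAlternatingMap_apply, LinearEquiv.coe_coe]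
      refine congrArg _ (congrArg _ (funext fun s => ?_))
      simp [hzdef]
    rw [← h3, h2]
  have hsum : (α.domCoprod γ) W
      = AlternatingMap.domCoprod.summand α γ (Quotient.mk'' 1) W := by
    rw [show (α.domCoprod γ) W = (∑ σ : Equiv.Perm.ModSumCongr (Fin k) (Fin l),
        AlternatingMap.domCoprod.summand α γ σ) W from rfl]
    rw [MultilinearMap.sum_apply]
    refine Finset.sum_eq_single _ (fun c _ hc => ?_) (fun hmem => absurd (Finset.mem_univ _) hmem)
    induction c using Quotient.inductionOn' with
    | h σ =>
      have hσ : σ ∉ (Equiv.Perm.sumCongrHom (Fin k) (Fin l)).range := by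
        intro hmem
        apply hc
        apply Quotient.sound'
        rw [QuotientGroup.leftRel_apply]
        simpa using (Equiv.Perm.sumCongrHom (Fin k) (Fin l)).range.inv_mem hmem
      obtain ⟨i0, hi0⟩ : ∃ i0, ∀ i', σ (Sum.inl i0) ≠ Sum.inl i' := by
        by_contra hcon
        push_neg at hcon
        exact hσ (mem_sumCongr_range' hcon)
      obtain ⟨j0, hj0⟩ : ∃ j0, σ (Sum.inl i0) = Sum.inr j0 := by
        cases hs : σ (Sum.inl i0) with
        | inl i' => exact absurd hs (hi0 i')
        | inr j' => exact ⟨j', rfl⟩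
      rw [AlternatingMap.domCoprod.summand_mk'']
      have hα0 : α (fun i => W (σ (Sum.inl i))) = 0 := by
        rw [hαdef]
        have : (fun i => W (σ (Sum.inl i)))
            = fun i => Pi.single (Sum.elim u v (σ (Sum.inl i))) (1:ℝ) := rfl
        rw [this]
        refine cov_zero' u (fun i => Sum.elim u v (σ (Sum.inl i))) i0 ?_
        intro j
        show u j ≠ Sum.elim u v (σ (Sum.inl i0))
        rw [hj0]
        exact huv j j0
      simp only [MultilinearMap.smul_apply, MultilinearMap.domDomCongr_apply,
        MultilinearMap.domCoprod_apply, AlternatingMap.coe_multilinearMap, Function.comp]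
      rw [hα0, TensorProduct.zero_tmul, smul_zero]
  rw [hsum, AlternatingMap.domCoprod.summand_mk''] at hW0
  simp only [map_one, one_smul, MultilinearMap.domDomCongr_apply, Equiv.Perm.coe_one, id_eq,
    MultilinearMap.domCoprod_apply, AlternatingMap.coe_multilinearMap, Function.comp] at hW0
  have hαone : α (fun i => W (Sum.inl i)) = 1 := by
    rw [hαdef]
    exact cov_one' u huinj
  rw [hαone] at hW0
  simpa [hWdef] using hW0

lemma gInner_eq_zero' {N k : ℕ} (x : Vec N) (i : Fin N) (hxi : x i = 0)
    (β : Vec N [⋀^Fin k]→ₗ[ℝ] ℝ) (hres : faceRestrict i β = 0)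
    (α : Vec N [⋀^Fin k]→ₗ[ℝ] ℝ) : gInner x α β = 0 := by
  unfold gInner
  refine Finset.sum_eq_zero fun s _ => ?_
  split_ifs with hs
  · by_cases hi : i ∈ s
    · rw [Finset.prod_eq_zero hi hxi, zero_mul, zero_mul]
    · have hker : ∀ j : Fin k, (Pi.single ((s.orderIsoOfFin hs j : Fin N)) (1:ℝ) : Vec N)
          ∈ LinearMap.ker (LinearMap.proj i : Vec N →ₗ[ℝ] ℝ) := by
        intro j
        have hne : i ≠ (s.orderIsoOfFin hs j : Fin N) := by
          intro hEq
          exact hi (hEq ▸ (s.orderIsoOfFin hs j).2)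
        simp only [LinearMap.mem_ker, LinearMap.proj_apply, Pi.single_apply, if_neg hne]
      have hz : β (fun j => Pi.single ((s.orderIsoOfFin hs j : Fin N)) (1:ℝ)) = 0 := by
        have : β (fun j => Pi.single ((s.orderIsoOfFin hs j : Fin N)) (1:ℝ))
            = faceRestrict i β (fun j => ⟨_, hker j⟩) := rfl
        rw [this, hres]
        simp
      rw [hz, mul_zero]
  · rfl

end Aux

/-- If the pullback of the `k`-form `β` to every boundary face `Γᵢ = {xᵢ = 0}` of the closed
orthant vanishes, then `*_g β` vanishes identically (all components) at every boundary point
of the orthant. -/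
theorem stmt17 (n k l : ℕ) (h : k + l = n + 1) (β : Form (n + 1) k)
    (hβ : ∀ i : Fin (n + 1), ∀ x : Vec (n + 1), (∀ j, 0 ≤ x j) → x i = 0 →
      faceRestrict i (β x) = 0)
    (x : Vec (n + 1)) (hx : ∀ j, 0 ≤ x j) (hbx : ∃ i, x i = 0) :
    hodge h x (β x) = 0 := by
  obtain ⟨i, hxi⟩ := hbx
  have hres := hβ i x hx hxi
  have hg : ∀ α : Vec (n+1) [⋀^Fin k]→ₗ[ℝ] ℝ, gInner x α (β x) = 0 :=
    fun α => gInner_eq_zero' x i hxi (β x) hres α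
  have Hex : ∃ γ : Vec (n+1) [⋀^Fin l]→ₗ[ℝ] ℝ, ∀ α : Vec (n+1) [⋀^Fin k]→ₗ[ℝ] ℝ,
      castForm h (wedge α γ) = gInner x α (β x) • vol (n+1) :=
    ⟨0, fun α => by rw [wedge_zero', castForm_zero', hg, zero_smul]⟩
  unfold hodge
  rw [dif_pos Hex]
  refine wedge_nondeg' h _ (fun α => ?_)
  rw [Hex.choose_spec α, hg, zero_smul]

end FEEC
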